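/- For every prime p and integer d ≥ 2p-1, the minrank over F_p of the generalized Kneser graph K(d, 2p-1, {p-1}) is at most Σ_{i=0}^{p-1} C(d,i). -/

import Mathlib

/-- A matrix `M` over a field `F` represents a simple graph `G` if all diagonal entries are
nonzero and entries at distinct non-adjacent pairs of vertices are zero. -/
def Represents {V F : Type*} [Field F] (G : SimpleGraph V) (M : Matrix V V F) : Prop :=
  (∀ v, M v v ≠ 0) ∧ ∀ u v : V, u ≠ v → ¬G.Adj u v → M u v = 0

/-- The minrank of a simple graph `G` over a field `F`. -/
noncomputable def minrank (F : Type*) [Field F] {V : Type*} [Fintype V] [DecidableEq V]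
    (G : SimpleGraph V) : ℕ :=
  sInf {r : ℕ | ∃ M : Matrix V V F, Represents G M ∧ M.rank = r}

/-- The generalized Kneser graph `K(d, s, T)`: vertices are the `s`-subsets of `[d]`, and two
distinct sets are adjacent iff the size of their intersection lies in `T`. -/
def kneser (d s : ℕ) (T : Set ℕ) : SimpleGraph {A : Finset (Fin d) // A.card = s} where
  Adj A B := A ≠ B ∧ (A.1 ∩ B.1).card ∈ T
  symm := ⟨fun A B h => ⟨h.1.symm, by rw [Finset.inter_comm]; exact h.2⟩⟩
  loopless := ⟨fun A h => h.1 rfl⟩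

/-- For every prime `p` and integer `d ≥ 2p - 1`, the minrank over `F_p` of the generalized
Kneser graph `K(d, 2p-1, {p-1})` is at most `∑_{i=0}^{p-1} C(d, i)`. -/
theorem minrank_kneser_special_le (p : ℕ) [Fact p.Prime] (d : ℕ) (hd : 2 * p - 1 ≤ d) :
    minrank (ZMod p) (kneser d (2 * p - 1) ({p - 1} : Set ℕ)) ≤
      ∑ i ∈ Finset.range p, d.choose i := by
  classical
  have hp : p.Prime := Fact.out
  have hp1 : 1 ≤ p := hp.one_lt.le
  set V := {A : Finset (Fin d) // A.card = 2 * p - 1}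
  set W := {S : Finset (Fin d) // S.card = p - 1}
  set N : Matrix V W (ZMod p) := fun A S => if S.1 ⊆ A.1 then 1 else 0 with hN
  set M : Matrix V V (ZMod p) := N * N.transpose with hM
  -- entry formula
  have entry : ∀ A B : V, M A B = (((A.1 ∩ B.1).card.choose (p - 1) : ℕ) : ZMod p) := by
    intro A B
    have : M A B = ∑ S : W, (if S.1 ⊆ A.1 ∩ B.1 then (1 : ZMod p) else 0) := by
      rw [hM, Matrix.mul_apply]
      simp only [Matrix.transpose_apply]
      simp only [hN]
      refine Finset.sum_congr rfl fun S _ => ?_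
      by_cases h1 : S.1 ⊆ A.1 <;> by_cases h2 : S.1 ⊆ B.1 <;>
        simp [h1, h2, Finset.subset_inter_iff]
    rw [this, Finset.sum_boole]
    congr 1
    rw [← Finset.card_powersetCard (p - 1) (A.1 ∩ B.1)]
    apply Finset.card_bij (fun S _ => S.1)
    · intro S hS
      simp only [Finset.mem_filter, Finset.mem_univ, true_and] at hS
      rw [Finset.mem_powersetCard]
      exact ⟨hS, S.2⟩
    · intro S _ S' _ h
      exact Subtype.ext h
    · intro t ht
      rw [Finset.mem_powersetCard] at ht
      exact ⟨⟨t, ht.2⟩, by simp [ht.1], rfl⟩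
  have hrep : Represents (kneser d (2 * p - 1) ({p - 1} : Set ℕ)) M := by
    constructor
    · intro A
      rw [entry A A, Finset.inter_self, A.2]
      have hmod : (2 * p - 1).choose (p - 1) ≡ 1 [MOD p] := by
        have := Choose.choose_modEq_choose_mod_mul_choose_div_nat
          (n := 2 * p - 1) (k := p - 1) (p := p)
        have h1 : (2 * p - 1) % p = p - 1 := by
          have : 2 * p - 1 = p + (p - 1) := by omega
          rw [this, Nat.add_mod_left, Nat.mod_eq_of_lt (by omega)]
        have h2 : (2 * p - 1) / p = 1 := by
          have : 2 * p - 1 = p * 1 + (p - 1) := by omega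
          rw [this, Nat.mul_add_div (by omega), Nat.div_eq_of_lt (by omega)]
        have h3 : (p - 1) % p = p - 1 := Nat.mod_eq_of_lt (by omega)
        have h4 : (p - 1) / p = 0 := Nat.div_eq_of_lt (by omega)
        rw [h1, h2, h3, h4] at this
        simpa using this
      rw [show ((((2 * p - 1).choose (p - 1) : ℕ)) : ZMod p) = ((1 : ℕ) : ZMod p) from
        (ZMod.natCast_eq_natCast_iff _ _ _).mpr hmod]
      simp [hp.one_lt]
    · intro A B hne hnadj
      rw [entry A B]
      simp only [kneser, ne_eq, Set.mem_singleton_iff] at hnadj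
      rw [not_and] at hnadj
      have hcard : (A.1 ∩ B.1).card ≠ p - 1 := hnadj hne
      have hlt' : (A.1 ∩ B.1).card < A.1.card := by
        apply Finset.card_lt_card
        refine ⟨Finset.inter_subset_left, fun hsub => ?_⟩
        have hAB : A.1 ⊆ B.1 := fun x hx => (Finset.mem_inter.mp (hsub hx)).2
        exact hne (Subtype.ext (Finset.eq_of_subset_of_card_le hAB (by rw [A.2, B.2])))
      have hlt : (A.1 ∩ B.1).card < 2 * p - 1 := by rw [A.2] at hlt'; exact hlt'
      set t := (A.1 ∩ B.1).card with ht
      rcases lt_or_gt_of_ne hcard with h | h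
      · rw [Nat.choose_eq_zero_of_lt h]; simp
      · rw [ZMod.natCast_eq_zero_iff]
        exact hp.dvd_choose (by omega) (by omega) (by omega)
  have hrank : M.rank ≤ d.choose (p - 1) := by
    calc M.rank ≤ Fintype.card W := le_trans (Matrix.rank_mul_le_left N N.transpose)
          (Matrix.rank_le_card_width N)
    _ = d.choose (p - 1) := by
          rw [Fintype.card_finset_len, Fintype.card_fin]
  have hmem : M.rank ∈ {r : ℕ | ∃ M' : Matrix V V (ZMod p),
      Represents (kneser d (2 * p - 1) ({p - 1} : Set ℕ)) M' ∧ M'.rank = r} :=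
    ⟨M, hrep, rfl⟩
  refine le_trans (Nat.sInf_le hmem) (le_trans hrank ?_)
  exact Finset.single_le_sum (fun i _ => Nat.zero_le _)
    (Finset.mem_range.mpr (by omega))
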